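/- Let d ≥ 1, let p ≥ 1 be a real number, let η ∈ (0,1], and let u : ℝ^d → ℂ be measurable. Then, with all Lebesgue integrals interpreted in the extended nonnegative reals, (∫_{ℝ^d} |u(x)·log(|u(x)|²)|^p dx)^{1/p} ≤ (4/η)·[ (∫_{ℝ^d} |u(x)|^{p(1−η)} dx)^{1/p} + (∫_{ℝ^d} |u(x)|^{p(1+η)} dx)^{1/p} ]; in particular the L^p norm of u·log(|u|²) is controlled by the L^{p(1−η)} and L^{p(1+η)} norms of u. -/

import Mathlib

open MeasureTheory
open scoped ENNReal NNReal

lemma pointwise_log_bound {η : ℝ} (hη0 : 0 < η) (hη1 : η ≤ 1) {t : ℝ} (ht : 0 ≤ t) :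
    t * |Real.log (t ^ 2)| ≤ (2 / η) * (t ^ (1 - η) + t ^ (1 + η)) := by
  have h2 : Real.log (t ^ 2) = 2 * Real.log t := by
    rw [Real.log_pow]; norm_num
  rcases eq_or_lt_of_le ht with h0 | h0
  · simp [← h0]
    positivity
  rw [h2, abs_mul, abs_two]
  have hpos : ∀ a : ℝ, 0 ≤ t ^ a := fun a => Real.rpow_nonneg ht a
  rcases le_total t 1 with h1 | h1
  · have hlog : Real.log t ≤ 0 := Real.log_nonpos ht h1
    have habs : |Real.log t| = Real.log t⁻¹ := by
      rw [Real.log_inv, abs_of_nonpos hlog]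
    have hb : Real.log t⁻¹ ≤ (t⁻¹) ^ η / η :=
      Real.log_le_rpow_div (by positivity) hη0
    have hinv : (t⁻¹) ^ η = t ^ (-η) := by
      rw [Real.inv_rpow ht, ← Real.rpow_neg ht]
    have key : t * |Real.log t| ≤ t ^ (1 - η) / η := by
      rw [habs]
      calc t * Real.log t⁻¹ ≤ t * (t ^ (-η) / η) := by
            apply mul_le_mul_of_nonneg_left _ ht
            rw [← hinv]; exact hb
        _ = t ^ (1 - η) / η := by
            rw [mul_div_assoc', sub_eq_add_neg, Real.rpow_add h0, Real.rpow_one]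
    calc t * (2 * |Real.log t|) = 2 * (t * |Real.log t|) := by ring
      _ ≤ 2 * (t ^ (1 - η) / η) := by linarith
      _ ≤ (2 / η) * (t ^ (1 - η) + t ^ (1 + η)) := by
          rw [div_mul_eq_mul_div, mul_div_assoc]
          gcongr
          linarith [hpos (1 + η)]
  · have hlog : 0 ≤ Real.log t := Real.log_nonneg h1
    have hb : Real.log t ≤ t ^ η / η := Real.log_le_rpow_div ht hη0
    have key : t * |Real.log t| ≤ t ^ (1 + η) / η := by
      rw [abs_of_nonneg hlog]
      calc t * Real.log t ≤ t * (t ^ η / η) :=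
            mul_le_mul_of_nonneg_left hb ht
        _ = t ^ (1 + η) / η := by
            rw [mul_div_assoc', Real.rpow_add h0, Real.rpow_one]
    calc t * (2 * |Real.log t|) = 2 * (t * |Real.log t|) := by ring
      _ ≤ 2 * (t ^ (1 + η) / η) := by linarith
      _ ≤ (2 / η) * (t ^ (1 - η) + t ^ (1 + η)) := by
          rw [div_mul_eq_mul_div, mul_div_assoc]
          gcongr
          linarith [hpos (1 - η)]

/-- `L^p` bound for the logarithmic nonlinearity. -/
theorem log_nonlinearity_Lp_bound (d : ℕ) (hd : 1 ≤ d) (p : ℝ) (hp : 1 ≤ p)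
    (η : ℝ) (hη : η ∈ Set.Ioc (0 : ℝ) 1)
    (u : EuclideanSpace ℝ (Fin d) → ℂ) (hu : Measurable u) :
    (∫⁻ x, ENNReal.ofReal (‖u x * (Real.log (‖u x‖ ^ 2) : ℂ)‖ ^ p)) ^ (1 / p) ≤
      ENNReal.ofReal (4 / η) *
        ((∫⁻ x, ENNReal.ofReal (‖u x‖ ^ (p * (1 - η)))) ^ (1 / p) +
          (∫⁻ x, ENNReal.ofReal (‖u x‖ ^ (p * (1 + η)))) ^ (1 / p)) := by
  obtain ⟨hη0, hη1⟩ := hη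
  have hp0 : 0 < p := lt_of_lt_of_le one_pos hp
  set C : ℝ≥0∞ := ENNReal.ofReal (2 / η) with hC
  set g : EuclideanSpace ℝ (Fin d) → ℝ≥0∞ := fun x => ENNReal.ofReal (‖u x‖ ^ (1 - η)) with hg
  set h : EuclideanSpace ℝ (Fin d) → ℝ≥0∞ := fun x => ENNReal.ofReal (‖u x‖ ^ (1 + η)) with hh
  have hgm : Measurable g :=
    (((Real.continuous_rpow_const (by linarith)).measurable).comp hu.norm).ennreal_ofReal
  have hhm : Measurable h :=
    (((Real.continuous_rpow_const (by linarith)).measurable).comp hu.norm).ennreal_ofReal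
  -- pointwise bound in ENNReal
  have step1 : ∀ x, ENNReal.ofReal (‖u x * (Real.log (‖u x‖ ^ 2) : ℂ)‖ ^ p)
      ≤ (C * (g x + h x)) ^ p := by
    intro x
    have hnorm : ‖u x * (Real.log (‖u x‖ ^ 2) : ℂ)‖ = ‖u x‖ * |Real.log (‖u x‖ ^ 2)| := by
      rw [norm_mul, Complex.norm_real, Real.norm_eq_abs]
    have hb := pointwise_log_bound hη0 hη1 (norm_nonneg (u x))
    have hb' : ‖u x * (Real.log (‖u x‖ ^ 2) : ℂ)‖
        ≤ (2 / η) * (‖u x‖ ^ (1 - η) + ‖u x‖ ^ (1 + η)) := hnorm ▸ hb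
    calc ENNReal.ofReal (‖u x * (Real.log (‖u x‖ ^ 2) : ℂ)‖ ^ p)
        = ENNReal.ofReal ‖u x * (Real.log (‖u x‖ ^ 2) : ℂ)‖ ^ p :=
          (ENNReal.ofReal_rpow_of_nonneg (norm_nonneg _) hp0.le).symm
      _ ≤ ENNReal.ofReal ((2 / η) * (‖u x‖ ^ (1 - η) + ‖u x‖ ^ (1 + η))) ^ p := by
          gcongr
      _ = (C * (g x + h x)) ^ p := by
          rw [ENNReal.ofReal_mul (by positivity), ENNReal.ofReal_add (by positivity) (by positivity)]
  -- integrate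
  have step2 : (∫⁻ x, ENNReal.ofReal (‖u x * (Real.log (‖u x‖ ^ 2) : ℂ)‖ ^ p)) ^ (1 / p)
      ≤ C * ((∫⁻ x, (g x + h x) ^ p) ^ (1 / p)) := by
    calc (∫⁻ x, ENNReal.ofReal (‖u x * (Real.log (‖u x‖ ^ 2) : ℂ)‖ ^ p)) ^ (1 / p)
        ≤ (∫⁻ x, (C * (g x + h x)) ^ p) ^ (1 / p) := by
          gcongr with x
          exact step1 x
      _ = (∫⁻ x, C ^ p * (g x + h x) ^ p) ^ (1 / p) := by
          simp_rw [ENNReal.mul_rpow_of_nonneg _ _ hp0.le]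
      _ = (C ^ p * ∫⁻ x, (g x + h x) ^ p) ^ (1 / p) := by
          exact congrArg (· ^ (1 / p)) (lintegral_const_mul'' _ (((hgm.add hhm).pow_const p).aemeasurable))
      _ = C * ((∫⁻ x, (g x + h x) ^ p) ^ (1 / p)) := by
          rw [ENNReal.mul_rpow_of_nonneg _ _ (by positivity),
            ← ENNReal.rpow_mul, mul_one_div, div_self hp0.ne', ENNReal.rpow_one]
  have step3 : (∫⁻ x, (g x + h x) ^ p) ^ (1 / p)
      ≤ (∫⁻ x, g x ^ p) ^ (1 / p) + (∫⁻ x, h x ^ p) ^ (1 / p) :=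
    ENNReal.lintegral_Lp_add_le hgm.aemeasurable hhm.aemeasurable hp
  have hgp : ∀ x, g x ^ p = ENNReal.ofReal (‖u x‖ ^ (p * (1 - η))) := by
    intro x
    simp only [hg]
    rw [ENNReal.ofReal_rpow_of_nonneg (by positivity) hp0.le,
      ← Real.rpow_mul (norm_nonneg _), mul_comm]
  have hhp : ∀ x, h x ^ p = ENNReal.ofReal (‖u x‖ ^ (p * (1 + η))) := by
    intro x
    simp only [hh]
    rw [ENNReal.ofReal_rpow_of_nonneg (by positivity) hp0.le,
      ← Real.rpow_mul (norm_nonneg _), mul_comm]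
  have hCle : C ≤ ENNReal.ofReal (4 / η) := by
    apply ENNReal.ofReal_le_ofReal
    gcongr
    norm_num
  calc (∫⁻ x, ENNReal.ofReal (‖u x * (Real.log (‖u x‖ ^ 2) : ℂ)‖ ^ p)) ^ (1 / p)
      ≤ C * ((∫⁻ x, (g x + h x) ^ p) ^ (1 / p)) := step2
    _ ≤ C * ((∫⁻ x, g x ^ p) ^ (1 / p) + (∫⁻ x, h x ^ p) ^ (1 / p)) := by
        gcongr
    _ ≤ ENNReal.ofReal (4 / η) *
        ((∫⁻ x, ENNReal.ofReal (‖u x‖ ^ (p * (1 - η)))) ^ (1 / p) +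
          (∫⁻ x, ENNReal.ofReal (‖u x‖ ^ (p * (1 + η)))) ^ (1 / p)) := by
        simp_rw [hgp, hhp]
        gcongr
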